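/- arXiv:2111.07862 — 6 statements merged into one kernel-verified Lean document; each statement's English description precedes it below -/
import Mathlib

section
/- For all integers n ≥ 1, k ≥ 1 and every integer c, the element x^n · y^k is nonzero in the ring R(n,k,c) = ℤ[X,Y]/(X^{n+1}, Y^{k+1} + c·X·Y^k). -/
open MvPolynomial

noncomputable section

/-- The ideal `(X^{n+1}, Y^{k+1} + c·X·Y^k)` in `ℤ[X,Y]`. -/
def relIdeal (n k : ℕ) (c : ℤ) : Ideal (MvPolynomial (Fin 2) ℤ) :=
  Ideal.span {(X 0 : MvPolynomial (Fin 2) ℤ) ^ (n + 1),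
    (X 1 : MvPolynomial (Fin 2) ℤ) ^ (k + 1) + C c * X 0 * (X 1 : MvPolynomial (Fin 2) ℤ) ^ k}

/-- The ring `R(n,k,c) = ℤ[X,Y]/(X^{n+1}, Y^{k+1} + c·X·Y^k)`. -/
abbrev R (n k : ℕ) (c : ℤ) := MvPolynomial (Fin 2) ℤ ⧸ relIdeal n k c

/-- The image `x` of `X` in `R(n,k,c)`. -/
def x (n k : ℕ) (c : ℤ) : R n k c := Ideal.Quotient.mk (relIdeal n k c) (X 0)

/-- The image `y` of `Y` in `R(n,k,c)`. -/
def y (n k : ℕ) (c : ℤ) : R n k c := Ideal.Quotient.mk (relIdeal n k c) (X 1)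

/-- Auxiliary ring `ℤ[X]/(X^{n+1})`. -/
abbrev Aaux (n : ℕ) := Polynomial ℤ ⧸ Ideal.span {(Polynomial.X : Polynomial ℤ) ^ (n + 1)}

/-- The image of `X` in `Aaux n`. -/
def aAux (n : ℕ) : Aaux n :=
  Ideal.Quotient.mk (Ideal.span {(Polynomial.X : Polynomial ℤ) ^ (n + 1)}) Polynomial.X

lemma aAux_pow_succ (n : ℕ) : aAux n ^ (n + 1) = 0 := by
  rw [aAux, ← map_pow, Ideal.Quotient.eq_zero_iff_mem]
  exact Ideal.subset_span rfl

lemma aAux_pow_ne (n : ℕ) : aAux n ^ n ≠ 0 := by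
  intro h
  rw [aAux, ← map_pow, Ideal.Quotient.eq_zero_iff_mem, Ideal.mem_span_singleton] at h
  have := Polynomial.natDegree_le_of_dvd h (pow_ne_zero _ Polynomial.X_ne_zero)
  simp [Polynomial.natDegree_X_pow] at this

instance (n : ℕ) : Nontrivial (Aaux n) := nontrivial_of_ne _ _ (aAux_pow_ne n)

/-- The polynomial `T^{k+1} + c·a·T^k` over `Aaux n`. -/
def fAux (n k : ℕ) (c : ℤ) : Polynomial (Aaux n) :=
  Polynomial.X ^ (k + 1) + Polynomial.C ((c : Aaux n) * aAux n) * Polynomial.X ^ k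

lemma fAux_monic (n k : ℕ) (c : ℤ) : (fAux n k c).Monic := by
  apply Polynomial.monic_X_pow_add
  refine lt_of_le_of_lt (Polynomial.degree_C_mul_X_pow_le k _) ?_
  exact_mod_cast Nat.lt_succ_self k

lemma fAux_natDegree (n k : ℕ) (c : ℤ) : (fAux n k c).natDegree = k + 1 := by
  have hdeg : (Polynomial.C ((c : Aaux n) * aAux n) * Polynomial.X ^ k).degree
      < ((Polynomial.X : Polynomial (Aaux n)) ^ (k + 1)).degree := by
    rw [Polynomial.degree_X_pow]
    refine lt_of_le_of_lt (Polynomial.degree_C_mul_X_pow_le k _) ?_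
    exact_mod_cast Nat.lt_succ_self k
  have h := Polynomial.degree_add_eq_left_of_degree_lt hdeg
  rw [Polynomial.degree_X_pow] at h
  have := Polynomial.natDegree_eq_of_degree_eq_some (p := fAux n k c) (by exact_mod_cast h)
  exact_mod_cast this

/-- For all `n ≥ 1`, `k ≥ 1` and every integer `c`, the element `x^n·y^k` is
nonzero in `R(n,k,c)`. -/
theorem stmt1 (n k : ℕ) (hn : 1 ≤ n) (hk : 1 ≤ k) (c : ℤ) :
    x n k c ^ n * y n k c ^ k ≠ 0 := by
  intro hz
  set f := fAux n k c with hf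
  set φ : MvPolynomial (Fin 2) ℤ →+* AdjoinRoot f :=
    (MvPolynomial.aeval ![AdjoinRoot.of f (aAux n), AdjoinRoot.root f]).toRingHom with hφ
  -- the ideal is killed by φ
  have hker : relIdeal n k c ≤ RingHom.ker φ := by
    rw [relIdeal, Ideal.span_le]
    rintro p hp
    simp only [Set.mem_insert_iff, Set.mem_singleton_iff] at hp
    rcases hp with rfl | rfl
    · show φ _ = 0
      simp only [hφ, map_pow, AlgHom.toRingHom_eq_coe, RingHom.coe_coe, aeval_X,
        Matrix.cons_val_zero]
      rw [← map_pow, aAux_pow_succ, map_zero]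
    · show φ _ = 0
      simp only [hφ, AlgHom.toRingHom_eq_coe, RingHom.coe_coe, map_add, map_mul, map_pow,
        aeval_X, Matrix.cons_val_zero, Matrix.cons_val_one, Matrix.head_cons, aeval_C,
        algebraMap_int_eq, eq_intCast, map_intCast]
      have h : AdjoinRoot.mk (fAux n k c) (Polynomial.X ^ (k + 1)
          + Polynomial.C ((c : Aaux n) * aAux n) * Polynomial.X ^ k) = 0 :=
        AdjoinRoot.mk_self (f := fAux n k c)
      simp only [map_add, map_mul, map_pow, AdjoinRoot.mk_X, Polynomial.C_mul,
        AdjoinRoot.mk_C, map_intCast] at h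
      rw [← hf] at h
      linear_combination h
  -- x^n y^k is hit
  have hmem : (X 0 : MvPolynomial (Fin 2) ℤ) ^ n * (X 1) ^ k ∈ relIdeal n k c := by
    rw [← Ideal.Quotient.eq_zero_iff_mem]
    simpa [x, y, map_mul, map_pow] using hz
  have h0 : φ ((X 0 : MvPolynomial (Fin 2) ℤ) ^ n * (X 1) ^ k) = 0 := hker hmem
  -- but φ of it is nonzero
  have hval : φ ((X 0 : MvPolynomial (Fin 2) ℤ) ^ n * (X 1) ^ k)
      = AdjoinRoot.mk f (Polynomial.C (aAux n ^ n) * Polynomial.X ^ k) := by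
    simp only [hφ, AlgHom.toRingHom_eq_coe, RingHom.coe_coe, map_mul, map_pow, aeval_X,
      Matrix.cons_val_zero, Matrix.cons_val_one, Matrix.head_cons]
    rw [show AdjoinRoot.of f (aAux n) = AdjoinRoot.mk f (Polynomial.C (aAux n)) from rfl,
      show AdjoinRoot.root f = AdjoinRoot.mk f Polynomial.X from rfl,
      ← map_pow]
  -- degree contradiction
  have hgne : (Polynomial.C (aAux n ^ n) * Polynomial.X ^ k : Polynomial (Aaux n)) ≠ 0 := by
    intro h
    apply aAux_pow_ne n
    have := congrArg (Polynomial.coeff · k) h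
    simp only [Polynomial.coeff_C_mul, Polynomial.coeff_X_pow, eq_self_iff_true, if_true,
      mul_one, Polynomial.coeff_zero] at this
    exact this
  have hdlt : (Polynomial.C (aAux n ^ n) * Polynomial.X ^ k : Polynomial (Aaux n)).natDegree
      < f.natDegree := by
    rw [hf, fAux_natDegree]
    exact lt_of_le_of_lt
      (le_trans (Polynomial.natDegree_C_mul_le _ _) (le_of_eq (Polynomial.natDegree_X_pow _)))
      (Nat.lt_succ_self k)
  exact AdjoinRoot.mk_ne_zero_of_natDegree_lt (fAux_monic n k c) hgne hdlt (hval ▸ h0)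

end
end

section
/- For all integers n ≥ 1, k ≥ 1, every integer c, and every natural number a with 0 ≤ a ≤ n, one has the identity y^{k+a} · x^{n−a} = (−c)^a · x^n · y^k in the ring R(n,k,c). -/
open MvPolynomial

noncomputable section

lemma key_rel (n k : ℕ) (c : ℤ) :
    y n k c ^ (k + 1) = (-c) • (x n k c * y n k c ^ k) := by
  have hmem : ((X 1 : MvPolynomial (Fin 2) ℤ) ^ (k + 1) + C c * X 0 * X 1 ^ k)
      ∈ relIdeal n k c :=
    Ideal.subset_span (by simp)
  have h0 : (Ideal.Quotient.mk (relIdeal n k c))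
      ((X 1 : MvPolynomial (Fin 2) ℤ) ^ (k + 1) + C c * X 0 * X 1 ^ k) = 0 :=
    (Ideal.Quotient.eq_zero_iff_mem).mpr hmem
  have : y n k c ^ (k + 1) + (Ideal.Quotient.mk (relIdeal n k c)) (C c)
      * x n k c * y n k c ^ k = 0 := by
    simpa [x, y, map_add, map_mul, map_pow] using h0
  have hc : (Ideal.Quotient.mk (relIdeal n k c)) (C c) = (c : R n k c) := by
    simp [map_intCast]
  rw [hc] at this
  have := eq_neg_of_add_eq_zero_left this
  rw [this]
  push_cast [zsmul_eq_mul]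
  ring

/-- For all `n ≥ 1`, `k ≥ 1`, every integer `c` and every natural number `a ≤ n`,
one has `y^{k+a}·x^{n-a} = (-c)^a · x^n·y^k` in `R(n,k,c)`. -/
theorem stmt2 (n k : ℕ) (hn : 1 ≤ n) (hk : 1 ≤ k) (c : ℤ) (a : ℕ) (ha : a ≤ n) :
    y n k c ^ (k + a) * x n k c ^ (n - a) = (-c) ^ a • (x n k c ^ n * y n k c ^ k) := by
  induction a with
  | zero => simp [mul_comm]
  | succ a ih =>
    have ha' : a ≤ n := le_of_lt (Nat.lt_of_succ_le ha)
    have ih := ih ha'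
    have hstep : y n k c ^ (k + (a + 1)) = (-c) • (x n k c * y n k c ^ (k + a)) := by
      have : y n k c ^ (k + (a + 1)) = y n k c ^ (k + 1) * y n k c ^ a := by
        rw [← pow_add]; ring_nf
      rw [this, key_rel n k c, smul_mul_assoc, mul_assoc, ← pow_add]
    have hx : x n k c * x n k c ^ (n - (a + 1)) = x n k c ^ (n - a) := by
      rw [← pow_succ']
      congr 1
      omega
    rw [hstep, smul_mul_assoc]
    have h2 : x n k c * y n k c ^ (k + a) * x n k c ^ (n - (a + 1))
        = y n k c ^ (k + a) * x n k c ^ (n - a) := by rw [← hx]; ring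
    rw [h2, ih, smul_smul, pow_succ, mul_comm]
end
end

section
/- Let n ≥ 1 and k ≥ 1 be odd integers, set m = (n+k)/2, and let a, b be natural numbers with a + b ≤ m. Then there exists a polynomial P ∈ ℤ[t] involving only odd powers of t and of degree at most n, such that for every integer c the identity y^{2a} · x^{2b} · (y + c·x)^{2(m−a−b)} = P(c) · x^n · y^k holds in the ring R(n,k,c). -/
open MvPolynomial

noncomputable section

lemma x_pow_succ (n k : ℕ) (c : ℤ) : x n k c ^ (n+1) = 0 := by
  rw [x, ← map_pow, Ideal.Quotient.eq_zero_iff_mem]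
  exact Ideal.subset_span (by simp)

lemma y_rel (n k : ℕ) (c : ℤ) :
    y n k c ^ (k+1) = -((c : R n k c) * x n k c * y n k c ^ k) := by
  have h : (Ideal.Quotient.mk (relIdeal n k c))
      ((X 1 : MvPolynomial (Fin 2) ℤ) ^ (k + 1) + C c * X 0 * X 1 ^ k) = 0 :=
    Ideal.Quotient.eq_zero_iff_mem.2 (Ideal.subset_span (by simp))
  have hc : (Ideal.Quotient.mk (relIdeal n k c)) (C c) = (c : R n k c) := by
    simp [map_intCast]
  simp only [map_add, map_mul, map_pow] at h
  rw [hc] at h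
  show (Ideal.Quotient.mk (relIdeal n k c)) (X 1) ^ (k+1) = -((c : R n k c) * (Ideal.Quotient.mk (relIdeal n k c)) (X 0) * (Ideal.Quotient.mk (relIdeal n k c)) (X 1) ^ k)
  linear_combination h

lemma key_red (n k : ℕ) (c : ℤ) (j : ℕ) : ∀ p : ℕ,
    x n k c ^ p * y n k c ^ (k + j)
      = (-(c : R n k c)) ^ j * (x n k c ^ (p + j) * y n k c ^ k) := by
  induction j with
  | zero => intro p; simp
  | succ j ih =>
    intro p
    have e1 : k + (j+1) = (k+1) + j := by ring
    rw [e1, pow_add, y_rel]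
    calc x n k c ^ p * (-((c : R n k c) * x n k c * y n k c ^ k) * y n k c ^ j)
        = -((c : R n k c) * (x n k c ^ (p+1) * y n k c ^ (k + j))) := by
          rw [pow_succ, pow_add]; ring
      _ = -((c : R n k c) * ((-(c : R n k c)) ^ j * (x n k c ^ (p+1+j) * y n k c ^ k))) := by
          rw [ih]
      _ = (-(c : R n k c)) ^ (j+1) * (x n k c ^ (p + (j+1)) * y n k c ^ k) := by
          rw [show p+1+j = p+(j+1) by ring, pow_succ]; ring

lemma total_red (n k : ℕ) (c : ℤ) (p q : ℕ) (hpq : p + q = n + k) :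
    x n k c ^ p * y n k c ^ q
      = (if k ≤ q then (-(c : R n k c)) ^ (q - k) else 0) * (x n k c ^ n * y n k c ^ k) := by
  by_cases h : k ≤ q
  · obtain ⟨j, rfl⟩ : ∃ j, q = k + j := ⟨q - k, by omega⟩
    rw [if_pos h, key_red, show p + j = n by omega, show k + j - k = j by omega]
  · obtain ⟨s, rfl⟩ : ∃ s, p = (n+1) + s := ⟨p - (n+1), by omega⟩
    rw [if_neg h, pow_add, x_pow_succ]; ring

/-- Let `n, k ≥ 1` be odd, `n + k = 2m`, and `a + b ≤ m`. Then there is a polynomial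
`P ∈ ℤ[t]` involving only odd powers of `t` and of degree at most `n` such that for
every integer `c`, `y^{2a}·x^{2b}·(y + c·x)^{2(m-a-b)} = P(c)·x^n·y^k` in `R(n,k,c)`. -/
theorem stmt3 (n k m : ℕ) (hn : 1 ≤ n) (hk : 1 ≤ k) (hno : Odd n) (hko : Odd k)
    (hm : n + k = 2 * m) (a b : ℕ) (hab : a + b ≤ m) :
    ∃ P : Polynomial ℤ, (∀ i : ℕ, P.coeff i ≠ 0 → Odd i) ∧ P.natDegree ≤ n ∧
      ∀ c : ℤ,
        y n k c ^ (2 * a) * x n k c ^ (2 * b) * (y n k c + c • x n k c) ^ (2 * (m - a - b))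
          = P.eval c • (x n k c ^ n * y n k c ^ k) := by
  set r := m - a - b with hr
  have hra : 2*a + 2*b + 2*r = n + k := by omega
  set A : ℤ := ∑ i ∈ Finset.range (2*r+1),
    if k ≤ 2*a+i then (-1:ℤ)^(2*a+i-k) * (2*r).choose i else 0 with hA
  refine ⟨Polynomial.C A * Polynomial.X ^ (n - 2*b), ?_, ?_, ?_⟩
  · intro i hi
    rw [Polynomial.coeff_C_mul, Polynomial.coeff_X_pow] at hi
    have hie : i = n - 2*b := by
      by_contra hne
      rw [if_neg hne, mul_zero] at hi
      exact hi rfl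
    subst hie
    rw [if_pos rfl, mul_one] at hi
    by_cases hbn : 2*b ≤ n
    · obtain ⟨w, hw⟩ := hno
      exact ⟨w - b, by omega⟩
    · exfalso
      apply hi
      rw [hA]
      refine Finset.sum_eq_zero fun i hi => ?_
      rw [Finset.mem_range] at hi
      rw [if_neg (by omega)]
  · refine le_trans (Polynomial.natDegree_mul_le) ?_
    rw [Polynomial.natDegree_C, Polynomial.natDegree_X_pow]
    omega
  · intro c
    rw [zsmul_eq_mul, zsmul_eq_mul, add_pow, Finset.mul_sum]
    have step : ∀ i ∈ Finset.range (2*r+1),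
        y n k c ^ (2*a) * x n k c ^ (2*b) *
          (y n k c ^ i * ((c : R n k c) * x n k c) ^ (2*r - i) * ((2*r).choose i : R n k c))
        = (((if k ≤ 2*a+i then ((2*r).choose i : ℤ) * (-c)^(2*a+i-k) * c^(2*r-i) else 0) : ℤ) : R n k c)
            * (x n k c ^ n * y n k c ^ k) := by
      intro i hi
      rw [Finset.mem_range] at hi
      have e1 : y n k c ^ (2*a) * x n k c ^ (2*b) *
          (y n k c ^ i * ((c : R n k c) * x n k c) ^ (2*r - i) * ((2*r).choose i : R n k c))
        = ((c : R n k c) ^ (2*r-i) * ((2*r).choose i : R n k c)) *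
            (x n k c ^ (2*b + (2*r - i)) * y n k c ^ (2*a + i)) := by
        rw [mul_pow, pow_add, pow_add]; ring
      rw [e1, total_red n k c _ _ (by omega)]
      by_cases h : k ≤ 2*a + i
      · rw [if_pos h, if_pos h]; push_cast; ring
      · rw [if_neg h, if_neg h]; push_cast; ring
    have hsum : (∑ i ∈ Finset.range (2*r+1),
          if k ≤ 2*a+i then ((2*r).choose i : ℤ) * (-c)^(2*a+i-k) * c^(2*r-i) else 0)
        = Polynomial.eval c (Polynomial.C A * Polynomial.X ^ (n - 2*b)) := by
      rw [Polynomial.eval_mul, Polynomial.eval_C, Polynomial.eval_pow, Polynomial.eval_X, hA,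
        Finset.sum_mul]
      refine Finset.sum_congr rfl fun i hi => ?_
      rw [Finset.mem_range] at hi
      by_cases h : k ≤ 2*a+i
      · rw [if_pos h, if_pos h, neg_pow]
        have e3 : c^(2*a+i-k) * c^(2*r-i) = c^(n-2*b) := by
          rw [← pow_add, show (2*a+i-k)+(2*r-i) = n-2*b by omega]
        calc ((2*r).choose i : ℤ) * ((-1)^(2*a+i-k) * c^(2*a+i-k)) * c^(2*r-i)
            = (-1)^(2*a+i-k) * ((2*r).choose i : ℤ) * (c^(2*a+i-k) * c^(2*r-i)) := by ring
          _ = (-1)^(2*a+i-k) * ((2*r).choose i : ℤ) * c^(n-2*b) := by rw [e3]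
      · rw [if_neg h, if_neg h, zero_mul]
    rw [Finset.sum_congr rfl step, ← Finset.sum_mul, ← Int.cast_sum, hsum]
end
end

section
/- Let n ≥ 1 and k ≥ 1 be odd integers and c any integer. Then in the ring R(n,k,c) one has the identity k · y^{n+k} + (n+1) · x^{n+k} + (y + c·x)^{n+k} = c^n · (C(n+k−1, n) − k) · x^n · y^k, where C denotes the binomial coefficient. -/
open MvPolynomial

noncomputable section

lemma x_pow_eq_zero (n k : ℕ) (c : ℤ) : x n k c ^ (n + 1) = 0 := by
  rw [x, ← map_pow, Ideal.Quotient.eq_zero_iff_mem]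
  exact Ideal.subset_span (Set.mem_insert _ _)

lemma y_pow_succ (n k : ℕ) (c : ℤ) :
    y n k c ^ (k + 1) = -((c : R n k c) * (x n k c * y n k c ^ k)) := by
  have h : (Ideal.Quotient.mk (relIdeal n k c))
      ((X 1 : MvPolynomial (Fin 2) ℤ) ^ (k + 1) + C c * X 0 * (X 1) ^ k) = 0 := by
    rw [Ideal.Quotient.eq_zero_iff_mem]
    exact Ideal.subset_span (Set.mem_insert_of_mem _ rfl)
  have hC : (C c : MvPolynomial (Fin 2) ℤ) = (c : MvPolynomial (Fin 2) ℤ) :=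
    eq_intCast MvPolynomial.C c
  rw [map_add, map_mul, map_mul, map_pow, map_pow, hC, map_intCast] at h
  rw [show (Ideal.Quotient.mk (relIdeal n k c)) (X 1) = y n k c from rfl,
    show (Ideal.Quotient.mk (relIdeal n k c)) (X 0) = x n k c from rfl] at h
  linear_combination h

lemma y_pow_add (n k : ℕ) (c : ℤ) (j : ℕ) :
    y n k c ^ (k + j) = (((-c) ^ j : ℤ) : R n k c) * (x n k c ^ j * y n k c ^ k) := by
  induction j with
  | zero => simp
  | succ j ih =>
    rw [show k + (j + 1) = (k + j) + 1 from rfl, pow_succ, ih]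
    calc (((-c) ^ j : ℤ) : R n k c) * (x n k c ^ j * y n k c ^ k) * y n k c
        = (((-c) ^ j : ℤ) : R n k c) * x n k c ^ j * y n k c ^ (k + 1) := by ring
      _ = (((-c) ^ j : ℤ) : R n k c) * x n k c ^ j
            * (-((c : R n k c) * (x n k c * y n k c ^ k))) := by rw [y_pow_succ]
      _ = (((-c) ^ (j + 1) : ℤ) : R n k c) * (x n k c ^ (j + 1) * y n k c ^ k) := by
            push_cast; ring

lemma alt_sum (m : ℕ) (N : ℕ) :
    ∑ j ∈ Finset.range (N + 1), (-1 : ℤ) ^ j * ((m + 1).choose j : ℤ)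
      = (-1) ^ N * (m.choose N : ℤ) := by
  induction N with
  | zero => simp
  | succ N ih =>
    rw [Finset.sum_range_succ, ih, Nat.choose_succ_succ]
    push_cast
    ring

lemma key_sum (n k : ℕ) (hk : 1 ≤ k) :
    ∑ j ∈ Finset.range (n + 1), (-1 : ℤ) ^ j * ((n + k).choose (k + j) : ℤ)
      = ((n + k - 1).choose n : ℤ) := by
  have h1 := Finset.sum_range_reflect
    (fun j => (-1 : ℤ) ^ j * ((n + k).choose (k + j) : ℤ)) (n + 1)
  rw [← h1]
  have h2 : ∀ j ∈ Finset.range (n + 1),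
      (-1 : ℤ) ^ (n + 1 - 1 - j) * ((n + k).choose (k + (n + 1 - 1 - j)) : ℤ)
        = (-1 : ℤ) ^ n * ((-1 : ℤ) ^ j * ((n + k).choose j : ℤ)) := by
    intro j hj
    rw [Finset.mem_range] at hj
    have hjn : j ≤ n := by omega
    have e1 : n + 1 - 1 - j = n - j := by omega
    have e2 : k + (n - j) = (n + k) - j := by omega
    have e3 : (n + k).choose ((n + k) - j) = (n + k).choose j :=
      Nat.choose_symm (by omega)
    have e4 : (-1 : ℤ) ^ (n - j) = (-1) ^ n * (-1) ^ j := by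
      have : (-1 : ℤ) ^ (n - j) * (-1) ^ j = (-1) ^ n := by
        rw [← pow_add]; congr 1; omega
      have h4 : ((-1 : ℤ) ^ j) * ((-1 : ℤ) ^ j) = 1 := by
        rw [← pow_add]; exact Even.neg_one_pow ⟨j, rfl⟩
      calc (-1 : ℤ) ^ (n - j) = (-1 : ℤ) ^ (n - j) * (((-1 : ℤ) ^ j) * ((-1 : ℤ) ^ j)) := by
            rw [h4, mul_one]
        _ = (-1) ^ n * (-1) ^ j := by rw [← mul_assoc, this]
    rw [e1, e2, e3, e4]
    ring
  rw [Finset.sum_congr rfl h2, ← Finset.mul_sum]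
  have hm : n + k = (n + k - 1) + 1 := by omega
  rw [hm, alt_sum (n + k - 1) n]
  have : (-1 : ℤ) ^ n * ((-1 : ℤ) ^ n) = 1 := by
    rw [← pow_add]; exact Even.neg_one_pow ⟨n, rfl⟩
  rw [← mul_assoc, this, one_mul]
  norm_num

set_option maxHeartbeats 1000000 in
/-- Let `n, k ≥ 1` be odd and `c` any integer. Then in `R(n,k,c)`:
`k·y^{n+k} + (n+1)·x^{n+k} + (y + c·x)^{n+k} = c^n·(C(n+k-1,n) - k)·x^n·y^k`. -/
theorem stmt6 (n k : ℕ) (hn : 1 ≤ n) (hk : 1 ≤ k) (hno : Odd n) (hko : Odd k) (c : ℤ) :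
    (k : ℤ) • y n k c ^ (n + k) + ((n : ℤ) + 1) • x n k c ^ (n + k)
        + (y n k c + c • x n k c) ^ (n + k)
      = (c ^ n * (((n + k - 1).choose n : ℤ) - (k : ℤ))) • (x n k c ^ n * y n k c ^ k) := by
  set X' := x n k c with hX'
  set Y' := y n k c with hY'
  -- x^{n+k} = 0
  have hx : X' ^ (n + k) = 0 := by
    rw [show n + k = (n + 1) + (k - 1) by omega, pow_add, x_pow_eq_zero, zero_mul]
  -- y^{n+k} = (-c)^n • x^n y^k
  have hy : Y' ^ (n + k) = (((-c) ^ n : ℤ) : R n k c) * (X' ^ n * Y' ^ k) := by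
    rw [show n + k = k + n from add_comm n k, y_pow_add]
  -- the binomial sum
  have hbin : (Y' + (c : R n k c) * X') ^ (n + k)
      = ((c ^ n * ((n + k - 1).choose n : ℤ) : ℤ) : R n k c) * (X' ^ n * Y' ^ k) := by
    rw [add_pow]
    have hzero : ∀ i ∈ Finset.range (n + k + 1), i ∉ Finset.Ico k (n + k + 1) →
        Y' ^ i * ((c : R n k c) * X') ^ (n + k - i) * ((n + k).choose i : R n k c) = 0 := by
      intro i hi hni
      rw [Finset.mem_range] at hi
      rw [Finset.mem_Ico] at hni
      have hik : i < k := by omega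
      rw [mul_pow, show n + k - i = (n + 1) + (k - 1 - i) by omega, pow_add (X'),
        x_pow_eq_zero]
      ring
    have hsub : Finset.Ico k (n + k + 1) ⊆ Finset.range (n + k + 1) := by
      intro i hi
      rw [Finset.mem_Ico] at hi
      rw [Finset.mem_range]
      omega
    rw [← Finset.sum_subset hsub hzero, Finset.sum_Ico_eq_sum_range,
      show n + k + 1 - k = n + 1 by omega]
    have hterm : ∀ j ∈ Finset.range (n + 1),
        Y' ^ (k + j) * ((c : R n k c) * X') ^ (n + k - (k + j))
            * ((n + k).choose (k + j) : R n k c)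
          = (((-1 : ℤ) ^ j * c ^ n * ((n + k).choose (k + j) : ℤ) : ℤ) : R n k c)
              * (X' ^ n * Y' ^ k) := by
      intro j hj
      rw [Finset.mem_range] at hj
      have hjn : j ≤ n := by omega
      rw [y_pow_add, show n + k - (k + j) = n - j by omega, mul_pow]
      have hxx : X' ^ j * X' ^ (n - j) = X' ^ n := by
        rw [← pow_add]; congr 1; omega
      have hcc : ((-c) ^ j : ℤ) * (c ^ (n - j)) = (-1) ^ j * c ^ n := by
        rw [neg_pow, mul_assoc, ← pow_add, show j + (n - j) = n by omega]
      calc (((-c) ^ j : ℤ) : R n k c) * (X' ^ j * Y' ^ k)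
            * ((c : R n k c) ^ (n - j) * X' ^ (n - j)) * ((n + k).choose (k + j) : R n k c)
          = ((((-c) ^ j * c ^ (n - j) : ℤ)) : R n k c) * ((n + k).choose (k + j) : R n k c)
              * (X' ^ j * X' ^ (n - j) * Y' ^ k) := by push_cast; ring
        _ = (((-1 : ℤ) ^ j * c ^ n * ((n + k).choose (k + j) : ℤ) : ℤ) : R n k c)
              * (X' ^ n * Y' ^ k) := by rw [hxx, hcc]; push_cast; ring
    rw [Finset.sum_congr rfl hterm, ← Finset.sum_mul, ← Int.cast_sum]
    congr 1
    have : ∑ j ∈ Finset.range (n + 1), (-1 : ℤ) ^ j * c ^ n * ((n + k).choose (k + j) : ℤ)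
        = c ^ n * ∑ j ∈ Finset.range (n + 1), (-1 : ℤ) ^ j * ((n + k).choose (k + j) : ℤ) := by
      rw [Finset.mul_sum]
      exact Finset.sum_congr rfl fun j _ => by ring
    rw [this, key_sum n k hk]
  -- put everything together
  have hsmul : c • X' = (c : R n k c) * X' := zsmul_eq_mul X' c
  rw [hsmul, hbin, hy, hx, Odd.neg_pow hno,
    zsmul_eq_mul, zsmul_eq_mul, zsmul_eq_mul]
  push_cast
  ring

end
end

section
/- Let n ≥ 3 and k ≥ 3 be odd integers and c a nonzero integer. Then the element k · y^{n+k} + (n+1) · x^{n+k} + (y + c·x)^{n+k} is nonzero in the ring R(n,k,c). -/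
open MvPolynomial

noncomputable section

namespace Stmt8Aux

open Finset

def D (a b : ℕ) : Fin 2 →₀ ℕ := Finsupp.single 0 a + Finsupp.single 1 b

@[simp] lemma D_apply0 (a b : ℕ) : D a b 0 = a := by
  simp [D, Finsupp.single_apply]

@[simp] lemma D_apply1 (a b : ℕ) : D a b 1 = b := by
  simp [D, Finsupp.single_apply]

lemma D_eq_iff {a b a' b' : ℕ} : D a' b' = D a b ↔ a' = a ∧ b' = b := by
  constructor
  · intro h
    exact ⟨by simpa using DFunLike.congr_fun h 0, by simpa using DFunLike.congr_fun h 1⟩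
  · rintro ⟨rfl, rfl⟩; rfl

lemma D_le_iff {a b a' b' : ℕ} : D a' b' ≤ D a b ↔ a' ≤ a ∧ b' ≤ b := by
  rw [Finsupp.le_def]
  constructor
  · intro h; exact ⟨by simpa using h 0, by simpa using h 1⟩
  · rintro ⟨h1, h2⟩ i
    fin_cases i <;> simpa

lemma D_sub (a b a' b' : ℕ) : D a b - D a' b' = D (a - a') (b - b') := by
  ext i; fin_cases i <;> simp [Finsupp.tsub_apply]

lemma X_pow_mul_X_pow (a b : ℕ) :
    (X 0 : MvPolynomial (Fin 2) ℤ) ^ a * (X 1) ^ b = monomial (D a b) 1 := by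
  rw [X_pow_eq_monomial, X_pow_eq_monomial, monomial_mul, one_mul]; rfl

lemma X0_pow (a : ℕ) : (X 0 : MvPolynomial (Fin 2) ℤ) ^ a = monomial (D a 0) 1 := by
  rw [← X_pow_mul_X_pow a 0, pow_zero, mul_one]

lemma X1_pow (b : ℕ) : (X 1 : MvPolynomial (Fin 2) ℤ) ^ b = monomial (D 0 b) 1 := by
  rw [← X_pow_mul_X_pow 0 b, pow_zero, one_mul]

def L (n k : ℕ) (c : ℤ) (p : MvPolynomial (Fin 2) ℤ) : ℤ :=
  ∑ a ∈ range (n + 1), (-c) ^ (n - a) * coeff (D a (n + k - a)) p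

lemma L_vanish {n k : ℕ} {c : ℤ} (hk : 1 ≤ k) {p : MvPolynomial (Fin 2) ℤ}
    (hp : p ∈ relIdeal n k c) : L n k c p = 0 := by
  rw [relIdeal, Ideal.mem_span_pair] at hp
  obtain ⟨u, v, huv⟩ := hp
  have e1 : (X 0 : MvPolynomial (Fin 2) ℤ) ^ (n + 1) = monomial (D (n + 1) 0) 1 := X0_pow _
  have e2 : (X 1 : MvPolynomial (Fin 2) ℤ) ^ (k + 1) = monomial (D 0 (k + 1)) 1 := X1_pow _
  have e3 : C c * X 0 * (X 1 : MvPolynomial (Fin 2) ℤ) ^ k = monomial (D 1 k) c := by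
    rw [mul_assoc, ← pow_one (X 0 : MvPolynomial (Fin 2) ℤ), X_pow_mul_X_pow, C_mul_monomial,
      mul_one]
  rw [e1, e2, e3] at huv
  rw [← huv]
  unfold L
  simp only [mul_add, coeff_add, Finset.sum_add_distrib]
  have h1 : ∑ a ∈ range (n + 1),
      (-c) ^ (n - a) * coeff (D a (n + k - a)) (u * monomial (D (n + 1) 0) 1) = 0 := by
    apply Finset.sum_eq_zero
    intro a ha
    rw [Finset.mem_range] at ha
    rw [coeff_mul_monomial', if_neg, mul_zero]
    rw [D_le_iff]
    push_neg
    intro h; omega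
  have h2 : ∑ a ∈ range (n + 1),
      (-c) ^ (n - a) * coeff (D a (n + k - a)) (v * monomial (D 0 (k + 1)) 1) =
      ∑ a ∈ range n, (-c) ^ (n - a) * coeff (D a (n - 1 - a)) v := by
    rw [Finset.sum_range_succ]
    have hlast : (-c) ^ (n - n) * coeff (D n (n + k - n)) (v * monomial (D 0 (k + 1)) 1) = 0 := by
      rw [coeff_mul_monomial', if_neg, mul_zero]
      rw [D_le_iff]; push_neg; intro h; omega
    rw [hlast, add_zero]
    apply Finset.sum_congr rfl
    intro a ha
    rw [Finset.mem_range] at ha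
    rw [coeff_mul_monomial', if_pos (D_le_iff.mpr ⟨by omega, by omega⟩), D_sub, mul_one,
      Nat.sub_zero, show n + k - a - (k + 1) = n - 1 - a by omega]
  have h3 : ∑ a ∈ range (n + 1),
      (-c) ^ (n - a) * coeff (D a (n + k - a)) (v * monomial (D 1 k) c) =
      ∑ a ∈ range n, (-c) ^ (n - (a + 1)) * (coeff (D a (n - 1 - a)) v * c) := by
    rw [Finset.sum_range_succ']
    have h0 : (-c) ^ (n - 0) * coeff (D 0 (n + k - 0)) (v * monomial (D 1 k) c) = 0 := by
      rw [coeff_mul_monomial', if_neg, mul_zero]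
      rw [D_le_iff]; push_neg; intro h; omega
    rw [h0, add_zero]
    apply Finset.sum_congr rfl
    intro a ha
    rw [Finset.mem_range] at ha
    rw [coeff_mul_monomial', if_pos (D_le_iff.mpr ⟨by omega, by omega⟩), D_sub,
      show a + 1 - 1 = a from rfl, show n + k - (a + 1) - k = n - 1 - a by omega]
  rw [h1, h2, h3, zero_add, ← Finset.sum_add_distrib]
  apply Finset.sum_eq_zero
  intro a ha
  rw [Finset.mem_range] at ha
  have : n - a = (n - (a + 1)) + 1 := by omega
  rw [this, pow_succ]
  ring



lemma alt_sum (N : ℕ) : ∀ M : ℕ,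
    ∑ a ∈ range (M + 1), (-1 : ℤ) ^ a * ((N + 1).choose a : ℤ) = (-1) ^ M * (N.choose M : ℤ) := by
  intro M
  induction M with
  | zero => simp
  | succ M ih =>
    rw [Finset.sum_range_succ, ih, Nat.choose_succ_succ]
    push_cast
    ring

lemma choose_three_bound : ∀ j : ℕ, j + 3 < (j + 5).choose 3 := by
  intro j
  induction j with
  | zero => decide
  | succ j ih =>
    have h1 : (j + 6).choose 3 = (j + 5).choose 2 + (j + 5).choose 3 := Nat.choose_succ_succ _ _
    have h2 : 0 < (j + 5).choose 2 := Nat.choose_pos (by omega)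
    show j + 1 + 3 < (j + 6).choose 3
    omega

lemma choose_bound {n k : ℕ} (hn : 3 ≤ n) (hk : 3 ≤ k) : k < (n + k - 1).choose n := by
  have hs1 : (n + k - 1).choose n = (n + k - 1).choose (k - 1) := by
    have := Nat.choose_symm (n := n + k - 1) (k := n) (by omega)
    rw [show n + k - 1 - n = k - 1 by omega] at this
    omega
  have hs2 : (k + 2).choose (k - 1) = (k + 2).choose 3 := by
    have := Nat.choose_symm (n := k + 2) (k := k - 1) (by omega)
    rw [show k + 2 - (k - 1) = 3 by omega] at this
    omega
  have hmono : (k + 2).choose (k - 1) ≤ (n + k - 1).choose (k - 1) :=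
    Nat.choose_le_choose _ (by omega)
  have h3 : k < (k + 2).choose 3 := by
    have := choose_three_bound (k - 3)
    rw [show k - 3 + 5 = k + 2 by omega] at this
    omega
  omega

lemma neg_one_pow_sub {a n : ℕ} (h : a ≤ n) : (-1 : ℤ) ^ (n - a) = (-1) ^ n * (-1) ^ a := by
  have hsq : ((-1 : ℤ) ^ a) * ((-1) ^ a) = 1 := by
    rw [← pow_add]
    exact Even.neg_one_pow ⟨a, rfl⟩
  calc (-1 : ℤ) ^ (n - a) = (-1) ^ (n - a) * ((-1) ^ a * (-1) ^ a) := by rw [hsq, mul_one]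
    _ = (-1) ^ (n - a + a) * (-1) ^ a := by rw [pow_add]; ring
    _ = (-1) ^ n * (-1) ^ a := by rw [Nat.sub_add_cancel h]

lemma L_value {n k : ℕ} (hn : 3 ≤ n) (hk : 3 ≤ k) (hno : Odd n) {c : ℤ} (hc : c ≠ 0) :
    L n k c (C (k : ℤ) * X 1 ^ (n + k) + C ((n : ℤ) + 1) * X 0 ^ (n + k)
      + (X 1 + C c * X 0) ^ (n + k)) =
    c ^ n * (((n + k - 1).choose n : ℤ) - (k : ℤ)) := by
  have et1 : C (k : ℤ) * (X 1 : MvPolynomial (Fin 2) ℤ) ^ (n + k)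
      = monomial (D 0 (n + k)) (k : ℤ) := by
    rw [X1_pow, C_mul_monomial, mul_one]
  have et2 : C ((n : ℤ) + 1) * (X 0 : MvPolynomial (Fin 2) ℤ) ^ (n + k)
      = monomial (D (n + k) 0) ((n : ℤ) + 1) := by
    rw [X0_pow, C_mul_monomial, mul_one]
  have hD : ∀ j : ℕ, D 0 j + D (n + k - j) 0 = D (n + k - j) j := by
    intro j; ext i; fin_cases i <;> simp
  have et3 : ((X 1 : MvPolynomial (Fin 2) ℤ) + C c * X 0) ^ (n + k)
      = ∑ j ∈ range (n + k + 1),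
          monomial (D (n + k - j) j) (c ^ (n + k - j) * ((n + k).choose j : ℤ)) := by
    rw [add_pow]
    refine Finset.sum_congr rfl fun j hj => ?_
    rw [mul_pow, ← C_pow, X1_pow, X0_pow, C_mul_monomial, mul_one, monomial_mul, hD, one_mul,
      show ((n + k).choose j : MvPolynomial (Fin 2) ℤ) = C (((n + k).choose j : ℕ) : ℤ) from
        (map_natCast (C : ℤ →+* MvPolynomial (Fin 2) ℤ) _).symm,
      mul_comm (monomial (D (n + k - j) j) (c ^ (n + k - j))) (C _), C_mul_monomial,
      mul_comm (((n + k).choose j : ℤ)) (c ^ (n + k - j))]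
  rw [et1, et2, et3]
  unfold L
  simp only [coeff_add, mul_add, Finset.sum_add_distrib]
  have s1 : ∑ a ∈ range (n + 1), (-c) ^ (n - a) * coeff (D a (n + k - a)) (monomial (D 0 (n + k)) (k : ℤ))
      = (-c) ^ n * (k : ℤ) := by
    have : ∀ a ∈ range (n + 1), (-c) ^ (n - a) * coeff (D a (n + k - a)) (monomial (D 0 (n + k)) (k : ℤ))
        = if a = 0 then (-c) ^ (n - a) * (k : ℤ) else 0 := by
      intro a ha
      rw [Finset.mem_range] at ha
      rw [coeff_monomial]
      by_cases h : a = 0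
      · subst h
        rw [if_pos, if_pos rfl]
        rw [D_eq_iff]
        exact ⟨rfl, by omega⟩
      · rw [if_neg, if_neg h, mul_zero]
        rw [D_eq_iff]
        rintro ⟨h1, h2⟩
        exact h h1.symm
    rw [Finset.sum_congr rfl this, Finset.sum_ite_eq' (range (n + 1)) 0
      (fun a => (-c) ^ (n - a) * (k : ℤ)), if_pos (Finset.mem_range.mpr (by omega))]
    rw [Nat.sub_zero]
  have s2 : ∑ a ∈ range (n + 1), (-c) ^ (n - a)
      * coeff (D a (n + k - a)) (monomial (D (n + k) 0) ((n : ℤ) + 1)) = 0 := by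
    apply Finset.sum_eq_zero
    intro a ha
    rw [Finset.mem_range] at ha
    rw [coeff_monomial, if_neg, mul_zero]
    rw [D_eq_iff]
    rintro ⟨h1, h2⟩
    omega
  have s3 : ∑ a ∈ range (n + 1), (-c) ^ (n - a) * coeff (D a (n + k - a))
        (∑ j ∈ range (n + k + 1), monomial (D (n + k - j) j) (c ^ (n + k - j) * ((n + k).choose j : ℤ)))
      = c ^ n * ((n + k - 1).choose n : ℤ) := by
    have inner : ∀ a ∈ range (n + 1), coeff (D a (n + k - a))
        (∑ j ∈ range (n + k + 1), monomial (D (n + k - j) j) (c ^ (n + k - j) * ((n + k).choose j : ℤ)))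
        = c ^ a * ((n + k).choose a : ℤ) := by
      intro a ha
      rw [Finset.mem_range] at ha
      rw [MvPolynomial.coeff_sum]
      rw [Finset.sum_eq_single (n + k - a)]
      · rw [coeff_monomial, if_pos, show n + k - (n + k - a) = a by omega,
          Nat.choose_symm (by omega : a ≤ n + k)]
        rw [show n + k - (n + k - a) = a by omega]
      · intro j hj hne
        rw [coeff_monomial, if_neg]
        rw [D_eq_iff]
        rintro ⟨h1, h2⟩
        exact hne (by omega)
      · intro h
        exact absurd (Finset.mem_range.mpr (by omega)) h
    rw [Finset.sum_congr rfl (fun a ha => by rw [inner a ha])]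
    have step : ∀ a ∈ range (n + 1),
        (-c) ^ (n - a) * (c ^ a * ((n + k).choose a : ℤ))
        = ((-1) ^ n * c ^ n) * ((-1) ^ a * ((n + k).choose a : ℤ)) := by
      intro a ha
      rw [Finset.mem_range] at ha
      rw [neg_pow, neg_one_pow_sub (by omega : a ≤ n)]
      have hc2 : c ^ (n - a) * c ^ a = c ^ n := by
        rw [← pow_add, Nat.sub_add_cancel (by omega : a ≤ n)]
      calc (-1 : ℤ) ^ n * (-1) ^ a * c ^ (n - a) * (c ^ a * ((n + k).choose a : ℤ))
          = ((-1) ^ n * (c ^ (n - a) * c ^ a)) * ((-1) ^ a * ((n + k).choose a : ℤ)) := by ring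
        _ = _ := by rw [hc2]
    rw [Finset.sum_congr rfl step, ← Finset.mul_sum]
    have halt := alt_sum (n + k - 1) n
    rw [show n + k - 1 + 1 = n + k by omega] at halt
    rw [halt]
    have : ((-1 : ℤ) ^ n) * ((-1) ^ n) = 1 := by
      rw [← pow_add]; exact Even.neg_one_pow ⟨n, rfl⟩
    calc (-1 : ℤ) ^ n * c ^ n * ((-1) ^ n * ((n + k - 1).choose n : ℤ))
        = ((-1) ^ n * (-1) ^ n) * (c ^ n * ((n + k - 1).choose n : ℤ)) := by ring
      _ = c ^ n * ((n + k - 1).choose n : ℤ) := by rw [this, one_mul]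
  rw [s1, s2, s3, add_zero]
  rw [Odd.neg_pow hno]
  ring

end Stmt8Aux

/-- Let `n, k ≥ 3` be odd and `c` a nonzero integer. Then the element
`k·y^{n+k} + (n+1)·x^{n+k} + (y + c·x)^{n+k}` is nonzero in `R(n,k,c)`. -/
theorem stmt8 (n k : ℕ) (hn : 3 ≤ n) (hk : 3 ≤ k) (hno : Odd n) (hko : Odd k)
    (c : ℤ) (hc : c ≠ 0) :
    (k : ℤ) • y n k c ^ (n + k) + ((n : ℤ) + 1) • x n k c ^ (n + k)
        + (y n k c + c • x n k c) ^ (n + k) ≠ 0 := by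
  intro h0
  set P : MvPolynomial (Fin 2) ℤ :=
    C (k : ℤ) * X 1 ^ (n + k) + C ((n : ℤ) + 1) * X 0 ^ (n + k)
      + (X 1 + C c * X 0) ^ (n + k) with hP
  have hCa : ∀ a : ℤ, (Ideal.Quotient.mk (relIdeal n k c)) (C a) = (a : R n k c) := by
    intro a
    have h1 : (C a : MvPolynomial (Fin 2) ℤ) = (a : MvPolynomial (Fin 2) ℤ) := by
      rw [← map_intCast (C : ℤ →+* MvPolynomial (Fin 2) ℤ) a, Int.cast_id]
    rw [h1, map_intCast]
  have key : (k : ℤ) • y n k c ^ (n + k) + ((n : ℤ) + 1) • x n k c ^ (n + k)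
      + (y n k c + c • x n k c) ^ (n + k) = Ideal.Quotient.mk (relIdeal n k c) P := by
    rw [hP]
    simp only [map_add, map_mul, map_pow, hCa, x, y, zsmul_eq_mul]
    push_cast
    ring
  rw [key] at h0
  have hmem : P ∈ relIdeal n k c := Ideal.Quotient.eq_zero_iff_mem.mp h0
  have hL0 : Stmt8Aux.L n k c P = 0 := Stmt8Aux.L_vanish (by omega) hmem
  rw [hP, Stmt8Aux.L_value hn hk hno hc] at hL0
  have hne : c ^ n * (((n + k - 1).choose n : ℤ) - (k : ℤ)) ≠ 0 := by
    apply mul_ne_zero (pow_ne_zero _ hc)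
    have := Stmt8Aux.choose_bound hn hk
    omega
  exact hne hL0
end
end

section
/- Let k ≥ 3 be an odd integer and c any integer. Then in the ring R(3,k,c) one has the identity 4·x²·(k·y^{k+1} + 4·x^{k+1} + (y+c·x)^{k+1}) + k·y²·((k−1)·y^{k+1} + 4·x^{k+1} + (y+c·x)^{k+1}) + (y+c·x)²·(k·y^{k+1} + 4·x^{k+1}) = k·(C(k, 3) − (k−1))·c³ · x³ · y^k; in particular the coefficient of the linear power c vanishes, so the q-number of X_3^k(c) is an integer multiple of c³. -/
open MvPolynomial

noncomputable section

theorem trunc4 {A : Type*} [CommRing A] (a b : A) (ha : a ^ 4 = 0) (m : ℕ) :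
    (a + b) ^ (m + 4) = b ^ (m + 4) + ((m + 4 : ℕ) : A) * (a * b ^ (m + 3))
      + (((m + 4).choose 2 : ℕ) : A) * (a ^ 2 * b ^ (m + 2))
      + (((m + 4).choose 3 : ℕ) : A) * (a ^ 3 * b ^ (m + 1)) := by
  rw [add_pow]
  rw [← Finset.sum_subset (Finset.range_subset_range.2 (by omega : 4 ≤ m + 4 + 1))
      (fun i _ hni => by
        obtain ⟨j, rfl⟩ : ∃ j, i = 4 + j := ⟨i - 4, by simp at hni; omega⟩
        simp [pow_add, ha])]
  rw [Finset.sum_range_succ, Finset.sum_range_succ, Finset.sum_range_succ,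
    Finset.sum_range_one]
  rw [show m + 4 - 1 = m + 3 by omega, show m + 4 - 2 = m + 2 by omega,
    show m + 4 - 3 = m + 1 by omega]
  simp [Nat.choose_one_right]
  ring

set_option maxHeartbeats 2000000 in
theorem stmt10_aux (k : ℕ) (hk : 3 ≤ k) (c : ℤ) :
    ((4 : ℤ) • (x 3 k c ^ 2 *
        ((k : ℤ) • y 3 k c ^ (k + 1) + (4 : ℤ) • x 3 k c ^ (k + 1)
          + (y 3 k c + c • x 3 k c) ^ (k + 1)))
      + (k : ℤ) • (y 3 k c ^ 2 *
        (((k : ℤ) - 1) • y 3 k c ^ (k + 1) + (4 : ℤ) • x 3 k c ^ (k + 1)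
          + (y 3 k c + c • x 3 k c) ^ (k + 1)))
      + (y 3 k c + c • x 3 k c) ^ 2 *
        ((k : ℤ) • y 3 k c ^ (k + 1) + (4 : ℤ) • x 3 k c ^ (k + 1))
      = ((k : ℤ) * ((k.choose 3 : ℤ) - ((k : ℤ) - 1)) * c ^ 3)
          • (x 3 k c ^ 3 * y 3 k c ^ k)) := by
  obtain ⟨m, rfl⟩ : ∃ m, k = m + 3 := ⟨k - 3, by omega⟩
  set A := R 3 (m + 3) c with hA
  set XX := x 3 (m + 3) c with hX
  set YY := y 3 (m + 3) c with hY
  have hx4 : XX ^ 4 = 0 := by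
    rw [hX, x, ← map_pow, Ideal.Quotient.eq_zero_iff_mem]
    exact Ideal.subset_span (Set.mem_insert _ _)
  have h1 : YY ^ (m + 4) + (c : A) * (XX * YY ^ (m + 3)) = 0 := by
    have hm : (X 1 : MvPolynomial (Fin 2) ℤ) ^ (m + 3 + 1)
        + C c * X 0 * (X 1 : MvPolynomial (Fin 2) ℤ) ^ (m + 3) ∈ relIdeal 3 (m + 3) c :=
      Ideal.subset_span (Set.mem_insert_iff.2 (Or.inr rfl))
    have h0 := (Ideal.Quotient.eq_zero_iff_mem).2 hm
    simpa [hX, hY, x, y, map_add, map_mul, map_pow, MvPolynomial.hom_C, mul_assoc,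
      show m + 3 + 1 = m + 4 from rfl] using h0
  have hu4 : ((c : A) * XX) ^ 4 = 0 := by rw [mul_pow, hx4, mul_zero]
  have hW := trunc4 ((c : A) * XX) YY hu4 m
  push_cast at hW
  have hBn : (m + 4).choose 3 + (m + 3) = (m + 4).choose 2 + (m + 3).choose 3 := by
    have e1 : (m + 4).choose 3 = (m + 3).choose 2 + (m + 3).choose 3 :=
      Nat.choose_succ_succ' (m + 3) 2
    have e2 : (m + 4).choose 2 = (m + 3).choose 1 + (m + 3).choose 2 :=
      Nat.choose_succ_succ' (m + 3) 1
    simp [Nat.choose_one_right] at e1 e2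
    omega
  have hB : (((m + 4).choose 3 : ℕ) : A) + ((m : A) + 3)
      = (((m + 4).choose 2 : ℕ) : A) + (((m + 3).choose 3 : ℕ) : A) := by
    exact_mod_cast congrArg (fun n : ℕ => (n : A)) hBn
  simp only [zsmul_eq_mul]
  push_cast
  linear_combination
    (4 * XX ^ 2 + ((m : A) + 3) * YY ^ 2) * hW
    + (16 * XX ^ (m + 2) + 4 * (((m + 4).choose 2 : ℕ) : A) * (c : A) ^ 2 * YY ^ (m + 2)
        + 4 * (((m + 4).choose 3 : ℕ) : A) * (c : A) ^ 3 * XX * YY ^ (m + 1)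
        + 4 * ((m : A) + 3) * XX ^ m * YY ^ 2 + 4 * (YY + (c : A) * XX) ^ 2 * XX ^ m) * hx4
    + (4 * ((m : A) + 4) * XX ^ 2
        + ((m : A) + 3) ^ 2 * ((c : A) ^ 2 * XX ^ 2 + YY ^ 2 - (c : A) * XX * YY)
        + ((m : A) + 3) * ((m : A) + 4) * ((c : A) * XX * YY - (c : A) ^ 2 * XX ^ 2)
        + ((m : A) + 3) * (((m + 4).choose 2 : ℕ) : A) * (c : A) ^ 2 * XX ^ 2
        + ((m : A) + 3) * ((c : A) ^ 2 * XX ^ 2 + YY ^ 2 - (c : A) * XX * YY)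
        + 2 * ((m : A) + 3) * ((c : A) * XX * YY - (c : A) ^ 2 * XX ^ 2)
        + ((m : A) + 3) * (c : A) ^ 2 * XX ^ 2) * h1
    + (((m : A) + 3) * (c : A) ^ 3 * XX ^ 3 * YY ^ (m + 3)) * hB


/-- Let `k ≥ 3` be odd and `c` any integer. Then in `R(3,k,c)`:
`4·x²·(k·y^{k+1} + 4·x^{k+1} + (y+cx)^{k+1})
 + k·y²·((k-1)·y^{k+1} + 4·x^{k+1} + (y+cx)^{k+1})
 + (y+cx)²·(k·y^{k+1} + 4·x^{k+1}) = k·(C(k,3) - (k-1))·c³·x³·y^k`;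
in particular the `c`-linear coefficient vanishes, so the q-number of `X_3^k(c)` is
an integer multiple of `c³`. -/
theorem stmt10 (k : ℕ) (hk : 3 ≤ k) (hko : Odd k) (c : ℤ) :
    ((4 : ℤ) • (x 3 k c ^ 2 *
        ((k : ℤ) • y 3 k c ^ (k + 1) + (4 : ℤ) • x 3 k c ^ (k + 1)
          + (y 3 k c + c • x 3 k c) ^ (k + 1)))
      + (k : ℤ) • (y 3 k c ^ 2 *
        (((k : ℤ) - 1) • y 3 k c ^ (k + 1) + (4 : ℤ) • x 3 k c ^ (k + 1)
          + (y 3 k c + c • x 3 k c) ^ (k + 1)))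
      + (y 3 k c + c • x 3 k c) ^ 2 *
        ((k : ℤ) • y 3 k c ^ (k + 1) + (4 : ℤ) • x 3 k c ^ (k + 1))
      = ((k : ℤ) * ((k.choose 3 : ℤ) - ((k : ℤ) - 1)) * c ^ 3)
          • (x 3 k c ^ 3 * y 3 k c ^ k))
    ∧ ∃ q : ℤ,
        (4 : ℤ) • (x 3 k c ^ 2 *
            ((k : ℤ) • y 3 k c ^ (k + 1) + (4 : ℤ) • x 3 k c ^ (k + 1)
              + (y 3 k c + c • x 3 k c) ^ (k + 1)))
          + (k : ℤ) • (y 3 k c ^ 2 *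
            (((k : ℤ) - 1) • y 3 k c ^ (k + 1) + (4 : ℤ) • x 3 k c ^ (k + 1)
              + (y 3 k c + c • x 3 k c) ^ (k + 1)))
          + (y 3 k c + c • x 3 k c) ^ 2 *
            ((k : ℤ) • y 3 k c ^ (k + 1) + (4 : ℤ) • x 3 k c ^ (k + 1))
          = (q * c ^ 3) • (x 3 k c ^ 3 * y 3 k c ^ k) := by
  exact ⟨stmt10_aux k hk c,
    ⟨(k : ℤ) * ((k.choose 3 : ℤ) - ((k : ℤ) - 1)), stmt10_aux k hk c⟩⟩
end
end
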